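/- Let k ≥ 4 and r ∈ {4,…,k}. Let F'_3 be the graph with vertex set {u, v, w, u', v₁, v₂, w₁, w₂} and edges u'v₁, u'v₂, v₁v, v₂v, u'w₁, u'w₂, w₁w, w₂w, uu', v₁v₂, w₁w₂. Let F''_3 be obtained from F'_3 by adding vertices y₄,…,y_k adjacent to all vertices of F'_3 except u, and let F_r = F''_3 − u'y_r. Let f assign colors in [k] to u, v, w, y₄,…,y_k with f(y_i) = i for 4 ≤ i ≤ k. Then f extends to a proper k-coloring of F_r if and only if f(v), f(w) ∈ {1,2,3} and (f(u) ≠ r, or f(v) = f(w)). -/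

import Mathlib

/-- `c` is a proper `k`-coloring of `G` with colors in `[k] = {1,…,k}`. -/
def IsProperKColoring {V : Type*} (G : SimpleGraph V) (k : ℕ) (c : V → ℕ) : Prop :=
  (∀ v, c v ∈ Finset.Icc 1 k) ∧ ∀ ⦃x y⦄, G.Adj x y → c x ≠ c y

/-- Index type for the vertices `y₄, …, y_k`. -/
def Yk (k : ℕ) : Type := {i : ℕ // 4 ≤ i ∧ i ≤ k}

/-- Vertices: `u = 0`, `v = 1`, `w = 2`, `u' = 3`, `v₁ = 4`, `v₂ = 5`, `w₁ = 6`,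
`w₂ = 7`, plus `y₄, …, y_k`.  Edges of `F'₃`: `u'v₁, u'v₂, v₁v, v₂v, u'w₁, u'w₂,
w₁w, w₂w, uu', v₁v₂, w₁w₂`; each `y_j` adjacent to all vertices of `F'₃` except
`u`, with the edge `u'y_r` removed. -/
def relFr (k r : ℕ) : (Fin 8 ⊕ Yk k) → (Fin 8 ⊕ Yk k) → Prop
  | .inl a, .inl b =>
      (a, b) ∈ ([(3,4),(3,5),(4,1),(5,1),(3,6),(3,7),(6,2),(7,2),(0,3),(4,5),(6,7)] :
        List (Fin 8 × Fin 8))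
  | .inl a, .inr j => a ≠ 0 ∧ ¬(a = 3 ∧ j.1 = r)
  | _, _ => False

/-- The gadget `F_r = F''₃ − u'y_r`. -/
def Fr (k r : ℕ) : SimpleGraph (Fin 8 ⊕ Yk k) := SimpleGraph.fromRel (relFr k r)

def o1 (a : ℕ) : ℕ := if a = 1 then 2 else 1
def o2 (a : ℕ) : ℕ := if a = 3 then 2 else 3

lemma o_facts (a : ℕ) (_h : a = 1 ∨ a = 2 ∨ a = 3) :
    1 ≤ o1 a ∧ o1 a ≤ 2 ∧ 2 ≤ o2 a ∧ o2 a ≤ 3 ∧ o1 a ≠ a ∧ o2 a ≠ a ∧ o1 a ≠ o2 a := by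
  unfold o1 o2 at *; split_ifs <;> omega

def cfin (u0 a b c3 : ℕ) : Fin 8 → ℕ
  | 0 => u0 | 1 => a | 2 => b | 3 => c3
  | 4 => o1 a | 5 => o2 a | 6 => o1 b | 7 => o2 b

lemma Fr_adj_lr (k r : ℕ) (p : Fin 8) (j : Yk k) (hp : p ≠ 0) (hpr : ¬(p = 3 ∧ j.1 = r)) :
    (Fr k r).Adj (.inl p) (.inr j) := by
  rw [Fr, SimpleGraph.fromRel_adj]
  exact ⟨by simp, Or.inl ⟨hp, hpr⟩⟩

lemma Fr_adj_ll (k r : ℕ) (p q : Fin 8) (h : relFr k r (.inl p) (.inl q)) (hne : p ≠ q) :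
    (Fr k r).Adj (.inl p) (.inl q) := by
  rw [Fr, SimpleGraph.fromRel_adj]
  exact ⟨by simpa using hne, Or.inl h⟩

lemma small_color (k r : ℕ) (c : (Fin 8 ⊕ Yk k) → ℕ)
    (hc : IsProperKColoring (Fr k r) k c) (hy : ∀ y : Yk k, c (.inr y) = y.1)
    (p : Fin 8) (hp : p ≠ 0) (hp3 : p = 3 → c (.inl p) ≠ r) : c (.inl p) ≤ 3 := by
  by_contra h
  push_neg at h
  have hm := hc.1 (.inl p)
  rw [Finset.mem_Icc] at hm
  have hadj := Fr_adj_lr k r p ⟨c (.inl p), by omega, hm.2⟩ hp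
    (by rintro ⟨h3, hcr⟩; exact hp3 h3 hcr)
  have := hc.2 hadj
  exact this (hy ⟨c (.inl p), by omega, hm.2⟩).symm

/-- A function `f` on `{u, v, w, y₄, …, y_k}` with `f(yᵢ) = i` extends to a proper
`k`-coloring of `F_r` iff `f v, f w ∈ {1,2,3}` and (`f u ≠ r` or `f v = f w`). -/
theorem Fr_extension (k r : ℕ) (hk : 4 ≤ k) (hr : 4 ≤ r ∧ r ≤ k)
    (f : (Fin 8 ⊕ Yk k) → ℕ)
    (hfu : f (.inl 0) ∈ Finset.Icc 1 k) (hfv : f (.inl 1) ∈ Finset.Icc 1 k)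
    (hfw : f (.inl 2) ∈ Finset.Icc 1 k)
    (hfy : ∀ y : Yk k, f (.inr y) = y.1) :
    (∃ c : (Fin 8 ⊕ Yk k) → ℕ, IsProperKColoring (Fr k r) k c ∧
        c (.inl 0) = f (.inl 0) ∧ c (.inl 1) = f (.inl 1) ∧ c (.inl 2) = f (.inl 2) ∧
        ∀ y : Yk k, c (.inr y) = f (.inr y)) ↔
      (f (.inl 1) ∈ ({1,2,3} : Set ℕ) ∧ f (.inl 2) ∈ ({1,2,3} : Set ℕ) ∧
        (f (.inl 0) ≠ r ∨ f (.inl 1) = f (.inl 2))) := by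
  obtain ⟨hr4, hrk⟩ := hr
  rw [Finset.mem_Icc] at hfu hfv hfw
  constructor
  · rintro ⟨c, ⟨hc1, hc2⟩, h0, h1, h2, hy'⟩
    have hy : ∀ y : Yk k, c (.inr y) = y.1 := fun y => (hy' y).trans (hfy y)
    have hcP : IsProperKColoring (Fr k r) k c := ⟨hc1, hc2⟩
    have b1 : c (.inl 1) ≤ 3 := small_color k r c hcP hy 1 (by decide)
      (fun h => absurd h (by decide))
    have b2 : c (.inl 2) ≤ 3 := small_color k r c hcP hy 2 (by decide)
      (fun h => absurd h (by decide))
    have b4 : c (.inl 4) ≤ 3 := small_color k r c hcP hy 4 (by decide)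
      (fun h => absurd h (by decide))
    have b5 : c (.inl 5) ≤ 3 := small_color k r c hcP hy 5 (by decide)
      (fun h => absurd h (by decide))
    have b6 : c (.inl 6) ≤ 3 := small_color k r c hcP hy 6 (by decide)
      (fun h => absurd h (by decide))
    have b7 : c (.inl 7) ≤ 3 := small_color k r c hcP hy 7 (by decide)
      (fun h => absurd h (by decide))
    have l1 := hc1 (.inl 1); have l2 := hc1 (.inl 2); have l3 := hc1 (.inl 3)
    have l4 := hc1 (.inl 4); have l5 := hc1 (.inl 5)
    have l6 := hc1 (.inl 6); have l7 := hc1 (.inl 7)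
    rw [Finset.mem_Icc] at l1 l2 l3 l4 l5 l6 l7
    refine ⟨?_, ?_, ?_⟩
    · rw [← h1]; simp only [Set.mem_insert_iff, Set.mem_singleton_iff]; omega
    · rw [← h2]; simp only [Set.mem_insert_iff, Set.mem_singleton_iff]; omega
    · by_contra hcon
      push_neg at hcon
      obtain ⟨h0r, hab⟩ := hcon
      rw [← h1, ← h2] at hab
      rw [← h0] at h0r
      have e03 := hc2 (Fr_adj_ll k r 0 3 (by simp [relFr]) (by decide))
      have e34 := hc2 (Fr_adj_ll k r 3 4 (by simp [relFr]) (by decide))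
      have e35 := hc2 (Fr_adj_ll k r 3 5 (by simp [relFr]) (by decide))
      have e41 := hc2 (Fr_adj_ll k r 4 1 (by simp [relFr]) (by decide))
      have e51 := hc2 (Fr_adj_ll k r 5 1 (by simp [relFr]) (by decide))
      have e45 := hc2 (Fr_adj_ll k r 4 5 (by simp [relFr]) (by decide))
      have e36 := hc2 (Fr_adj_ll k r 3 6 (by simp [relFr]) (by decide))
      have e37 := hc2 (Fr_adj_ll k r 3 7 (by simp [relFr]) (by decide))
      have e62 := hc2 (Fr_adj_ll k r 6 2 (by simp [relFr]) (by decide))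
      have e72 := hc2 (Fr_adj_ll k r 7 2 (by simp [relFr]) (by decide))
      have e67 := hc2 (Fr_adj_ll k r 6 7 (by simp [relFr]) (by decide))
      have h34 : 4 ≤ c (.inl 3) := by omega
      have h3r : c (.inl 3) ≠ r := by omega
      have hadj := Fr_adj_lr k r 3 ⟨c (.inl 3), h34, l3.2⟩ (by decide)
        (by rintro ⟨-, hc⟩; exact h3r hc)
      have := hc2 hadj
      exact this (hy ⟨c (.inl 3), h34, l3.2⟩).symm
  · rintro ⟨ha, hb, hor⟩
    simp only [Set.mem_insert_iff, Set.mem_singleton_iff] at ha hb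
    obtain ⟨oa1, oa2, oa3, oa4, oa5, oa6, oa7⟩ := o_facts _ ha
    obtain ⟨ob1, ob2, ob3, ob4, ob5, ob6, ob7⟩ := o_facts _ hb
    obtain ⟨c3, hc1, hc2, hc3, hc4, hc5, hc6, hc7, hc8⟩ :
        ∃ c3, 1 ≤ c3 ∧ c3 ≤ k ∧ c3 ≠ f (.inl 0) ∧ c3 ≠ o1 (f (.inl 1)) ∧
          c3 ≠ o2 (f (.inl 1)) ∧ c3 ≠ o1 (f (.inl 2)) ∧ c3 ≠ o2 (f (.inl 2)) ∧
          (c3 = r ∨ c3 ≤ 3) := by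
      by_cases hur : f (.inl 0) = r
      · have hab : f (.inl 1) = f (.inl 2) := hor.resolve_left (by simp [hur])
        refine ⟨f (.inl 1), by omega, by omega, by omega, ?_, ?_, ?_, ?_, Or.inr (by omega)⟩
        · omega
        · omega
        · rw [hab]; omega
        · rw [hab]; omega
      · exact ⟨r, by omega, hrk, fun h => hur h.symm, by omega, by omega, by omega,
          by omega, Or.inl rfl⟩
    refine ⟨Sum.elim (cfin (f (.inl 0)) (f (.inl 1)) (f (.inl 2)) c3) (fun y => y.1),
      ⟨?_, ?_⟩, by simp [cfin], by simp [cfin], by simp [cfin],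
      fun y => (hfy y).symm⟩
    · rintro (i | y)
      · fin_cases i <;> simp only [Sum.elim_inl, cfin, Finset.mem_Icc] <;> omega
      · simp only [Sum.elim_inr, Finset.mem_Icc]
        exact ⟨by have := y.2.1; omega, y.2.2⟩
    · have key : ∀ (p : Fin 8) (j : Yk k), p ≠ 0 → ¬(p = 3 ∧ j.1 = r) →
          Sum.elim (cfin (f (.inl 0)) (f (.inl 1)) (f (.inl 2)) c3) (fun (y : Yk k) => y.1)
            (.inl p) ≠ j.1 := by
        intro p j hp0 hp3
        have hj4 : 4 ≤ j.1 := j.2.1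
        fin_cases p
        · exact absurd rfl hp0
        · simp only [Sum.elim_inl, cfin]; omega
        · simp only [Sum.elim_inl, cfin]; omega
        · simp only [Sum.elim_inl, cfin]
          have hjr : j.1 ≠ r := fun h => hp3 ⟨rfl, h⟩
          rcases hc8 with h | h <;> omega
        · simp only [Sum.elim_inl, cfin]; omega
        · simp only [Sum.elim_inl, cfin]; omega
        · simp only [Sum.elim_inl, cfin]; omega
        · simp only [Sum.elim_inl, cfin]; omega
      rintro (p | j) (q | j') hadj <;>
        rw [Fr, SimpleGraph.fromRel_adj] at hadj <;> obtain ⟨hne, hrel⟩ := hadj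
      · have hrel' : relFr k r (.inl p) (.inl q) ∨ relFr k r (.inl q) (.inl p) := hrel
        simp only [relFr, List.mem_cons, List.not_mem_nil, or_false, Prod.mk.injEq] at hrel'
        rcases hrel' with (⟨rfl,rfl⟩|⟨rfl,rfl⟩|⟨rfl,rfl⟩|⟨rfl,rfl⟩|⟨rfl,rfl⟩|⟨rfl,rfl⟩|⟨rfl,rfl⟩|⟨rfl,rfl⟩|⟨rfl,rfl⟩|⟨rfl,rfl⟩|⟨rfl,rfl⟩)|(⟨rfl,rfl⟩|⟨rfl,rfl⟩|⟨rfl,rfl⟩|⟨rfl,rfl⟩|⟨rfl,rfl⟩|⟨rfl,rfl⟩|⟨rfl,rfl⟩|⟨rfl,rfl⟩|⟨rfl,rfl⟩|⟨rfl,rfl⟩|⟨rfl,rfl⟩) <;>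
        simp only [Sum.elim_inl, cfin] <;> omega
      · have hrel' : (p ≠ 0 ∧ ¬(p = 3 ∧ j'.1 = r)) ∨ False := hrel
        obtain ⟨hp0, hp3⟩ := hrel'.resolve_right id
        exact key p j' hp0 hp3
      · have hrel' : False ∨ (q ≠ 0 ∧ ¬(q = 3 ∧ j.1 = r)) := hrel
        obtain ⟨hp0, hp3⟩ := hrel'.resolve_left id
        exact (key q j hp0 hp3).symm
      · exact absurd hrel (by simp [relFr])
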